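/- Let (M, ρ) be a metric space and T = (M, E) a spanning tree. Then T is locally minimal (for every pair of vertices m, m', every edge of the path T[m, m'] has length at most ρ(m, m')) if and only if every edge of T is exact. Consequently, a locally minimal spanning tree of finite length is a minimal spanning tree. -/

import Mathlib

open scoped ENNReal

namespace MSTPaper

variable {M : Type*}

/-- The length of an edge `e` of a graph on a metric space: the extended
distance between its endpoints. -/
noncomputable def edgeLen [MetricSpace M] (e : Sym2 M) : ℝ≥0∞ :=
  Sym2.lift ⟨fun x y => edist x y, fun x y => edist_comm x y⟩ e

/-- The length of a graph: the (possibly infinite) sum of the lengths of its edges. -/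
noncomputable def graphLen [MetricSpace M] (G : SimpleGraph M) : ℝ≥0∞ :=
  ∑' e : G.edgeSet, edgeLen (e : Sym2 M)

/-- The distance between two subsets of a metric space. -/
noncomputable def setDist [MetricSpace M] (A B : Set M) : ℝ≥0∞ :=
  ⨅ x ∈ A, ⨅ y ∈ B, edist x y

/-- A minimal spanning tree on the metric space `M`: a spanning tree of finite
length whose length equals the infimum of lengths of all spanning trees on `M`. -/
def IsMST [MetricSpace M] (T : SimpleGraph M) : Prop :=
  T.IsTree ∧ graphLen T < ⊤ ∧ ∀ T' : SimpleGraph M, T'.IsTree → graphLen T ≤ graphLen T'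

/-- An edge `uv` of `G` is exact if its length equals the distance between the
two connected components obtained by removing it. -/
def ExactEdge [MetricSpace M] (G : SimpleGraph M) (u v : M) : Prop :=
  edist u v = setDist {x | (G.deleteEdges {s(u,v)}).Reachable u x}
                      {x | (G.deleteEdges {s(u,v)}).Reachable v x}

open SimpleGraph

@[simp] lemma edgeLen_mk [MetricSpace M] (a b : M) : edgeLen s(a, b) = edist a b := rfl

/-- On any walk from a vertex satisfying `P` to one not satisfying `P`,
there is an edge crossing the boundary. -/
lemma exists_boundary {V : Type*} {G : SimpleGraph V} (P : V → Prop) :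
    ∀ {u v : V}, (w : G.Walk u v) → P u → ¬ P v →
      ∃ x y, s(x, y) ∈ w.edges ∧ P x ∧ ¬ P y
  | _, _, SimpleGraph.Walk.nil, hu, hv => absurd hu hv
  | u, v, @SimpleGraph.Walk.cons _ _ _ c _ h p, hu, hv => by
    classical
    by_cases hc : P c
    · obtain ⟨x, y, hxy, hx, hy⟩ := exists_boundary P p hc hv
      exact ⟨x, y, by rw [Walk.edges_cons]; exact List.mem_cons_of_mem _ hxy, hx, hy⟩
    · exact ⟨u, c, by rw [Walk.edges_cons]; exact List.mem_cons_self, hu, hc⟩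

/-- After deleting the edge `s(x,y)`, the target of any walk is reachable from its
source, or from `x`, or from `y`. -/
lemma reach_aux {V : Type*} {G : SimpleGraph V} {x y : V} :
    ∀ {u v : V}, G.Walk u v →
      (G.deleteEdges {s(x, y)}).Reachable u v ∨
      (G.deleteEdges {s(x, y)}).Reachable x v ∨ (G.deleteEdges {s(x, y)}).Reachable y v
  | u, _, SimpleGraph.Walk.nil => Or.inl (Reachable.refl u)
  | u, v, @SimpleGraph.Walk.cons _ _ _ c _ h p => by
    classical
    rcases reach_aux (x := x) (y := y) p with hcv | hxv | hyv
    · by_cases he : s(u, c) = s(x, y)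
      · rw [Sym2.eq_iff] at he
        rcases he with ⟨hux, hcy⟩ | ⟨huy, hcx⟩
        · exact Or.inr (Or.inr (hcy ▸ hcv))
        · exact Or.inr (Or.inl (hcx ▸ hcv))
      · exact Or.inl ((SimpleGraph.Adj.reachable
          (SimpleGraph.deleteEdges_adj.mpr ⟨h, by simpa using he⟩)).trans hcv)
    · exact Or.inr (Or.inl hxv)
    · exact Or.inr (Or.inr hyv)

/-- In a connected graph, after deleting the edge `s(x,y)` every vertex is still
reachable from `x` or from `y`. -/
lemma reach_side {V : Type*} {G : SimpleGraph V} (hc : G.Connected) {x y : V} (z : V) :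
    (G.deleteEdges {s(x, y)}).Reachable x z ∨ (G.deleteEdges {s(x, y)}).Reachable y z := by
  obtain ⟨w⟩ := hc.preconnected x z
  rcases reach_aux (x := x) (y := y) w with h | h | h
  exacts [Or.inl h, Or.inl h, Or.inr h]

/-- If `a` and `b` become unreachable after deleting `s(a,b)`, then any walk between
vertices on opposite sides must use the edge `s(a,b)`. -/
lemma walk_cross {V : Type*} {G : SimpleGraph V} {a b : V}
    (hb : ¬ (G.deleteEdges {s(a, b)}).Reachable a b) {x y : V}
    (hx : (G.deleteEdges {s(a, b)}).Reachable a x)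
    (hy : (G.deleteEdges {s(a, b)}).Reachable b y)
    (w : G.Walk x y) : s(a, b) ∈ w.edges := by
  by_contra hmem
  have w' : (G.deleteEdges {s(a, b)}).Walk x y :=
    w.toDeleteEdges {s(a, b)} (fun e he hse => hmem (by rwa [Set.mem_singleton_iff.mp hse] at he))
  exact hb ((hx.trans w'.reachable).trans hy.symm)

/-- In an acyclic graph, deleting an edge of the graph disconnects its endpoints. -/
lemma tree_not_reach {V : Type*} {G : SimpleGraph V} (hac : G.IsAcyclic) {a b : V}
    (h : G.Adj a b) : ¬ (G.deleteEdges {s(a, b)}).Reachable a b :=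
  (SimpleGraph.isBridge_iff.mp (isAcyclic_iff_forall_adj_isBridge.mp hac h))

/-- In an acyclic graph, deleting an edge lying on a path disconnects the endpoints of
the path. -/
lemma path_sep {V : Type*} {G : SimpleGraph V} (hac : G.IsAcyclic) {u v : V}
    (p : G.Walk u v) (hp : p.IsPath) {e : Sym2 V} (he : e ∈ p.edges) :
    ¬ (G.deleteEdges {e}).Reachable u v := by
  classical
  rintro ⟨q⟩
  have hq : ∀ f ∈ (q.toPath.1 : (G.deleteEdges {e}).Walk u v).edges, f ∈ G.edgeSet := by
    intro f hf
    have h3 : f ∈ (G.deleteEdges {e}).edgeSet := (q.toPath.1).edges_subset_edgeSet hf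
    rw [SimpleGraph.edgeSet_deleteEdges] at h3
    exact h3.1
  have hpath : ((q.toPath.1).transfer G hq).IsPath := q.toPath.2.transfer hq
  have hEq : (⟨(q.toPath.1).transfer G hq, hpath⟩ : G.Path u v) = ⟨p, hp⟩ :=
    hac.path_unique _ _
  have hwe : (q.toPath.1).transfer G hq = p := congrArg Subtype.val hEq
  rw [← hwe, Walk.edges_transfer] at he
  have h2 : e ∈ (G.deleteEdges {e}).edgeSet := (q.toPath.1).edges_subset_edgeSet he
  rw [SimpleGraph.edgeSet_deleteEdges] at h2
  exact h2.2 rfl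

/-- The endpoints of a path lie on opposite sides of any edge of the path, in a tree. -/
lemma path_edge_sides {V : Type*} {G : SimpleGraph V} (hG : G.IsTree) {u v a b : V}
    (p : G.Walk u v) (hp : p.IsPath) (he : s(a, b) ∈ p.edges) :
    ((G.deleteEdges {s(a, b)}).Reachable a u ∧ (G.deleteEdges {s(a, b)}).Reachable b v) ∨
      ((G.deleteEdges {s(a, b)}).Reachable b u ∧ (G.deleteEdges {s(a, b)}).Reachable a v) := by
  have hsep : ¬ (G.deleteEdges {s(a, b)}).Reachable u v := path_sep hG.IsAcyclic p hp he
  rcases reach_side hG.isConnected (x := a) (y := b) u with hu | hu <;>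
    rcases reach_side hG.isConnected (x := a) (y := b) v with hv | hv
  · exact absurd (hu.symm.trans hv) hsep
  · exact Or.inl ⟨hu, hv⟩
  · exact Or.inr ⟨hu, hv⟩
  · exact absurd (hu.symm.trans hv) hsep

lemma edge_repr {V : Type*} {G : SimpleGraph V} {e : Sym2 V} (he : e ∈ G.edgeSet) :
    ∃ a b, G.Adj a b ∧ e = s(a, b) := by
  induction e using Sym2.ind with
  | _ x y => exact ⟨x, y, he, rfl⟩

/-- The key exchange lemma: if `T` is a locally minimal spanning tree, `S` is any
spanning tree, and `F` is a finite set of edges of `T` disjoint from `S`, then the total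
length of `F` together with the edges common to `S` and `T` is at most the length of `S`. -/
lemma key_exchange [MetricSpace M] {T : SimpleGraph M} (hT : T.IsTree)
    (hloc : ∀ m m' : M, ∀ p : T.Path m m', ∀ a b : M,
      s(a, b) ∈ p.1.edges → edist a b ≤ edist m m') :
    ∀ (n : ℕ) (F : Finset (Sym2 M)) (S : SimpleGraph M), F.card = n → S.IsTree →
      (∀ f ∈ F, f ∈ T.edgeSet) → (∀ f ∈ F, f ∉ S.edgeSet) →
      ∑ f ∈ F, edgeLen f + ∑' f : ↑(S.edgeSet ∩ T.edgeSet), edgeLen (f : Sym2 M) ≤ graphLen S := by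
  intro n
  induction n with
  | zero =>
    intro F S hcard hS hFT hFS
    rw [Finset.card_eq_zero.mp hcard]
    simp only [Finset.sum_empty, zero_add]
    unfold graphLen
    exact ENNReal.summable.tsum_le_tsum_of_inj (Set.inclusion Set.inter_subset_left)
      (Set.inclusion_injective Set.inter_subset_left) (fun c _ => zero_le)
      (fun b => le_rfl) ENNReal.summable
  | succ n ih =>
    intro F S hcard hS hFT hFS
    classical
    obtain ⟨e, he⟩ : F.Nonempty := Finset.card_pos.mp (by omega)
    have heT : e ∈ T.edgeSet := hFT _ he
    obtain ⟨a, b, hadj, rfl⟩ := edge_repr heT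
    have heS : s(a, b) ∉ S.edgeSet := hFS _ he
    have hb : ¬ (T.deleteEdges {s(a, b)}).Reachable a b := tree_not_reach hT.IsAcyclic hadj
    obtain ⟨w0⟩ := hS.isConnected.preconnected a b
    set p : S.Path a b := w0.toPath with hpdef
    obtain ⟨x, y, hxyE, hx, hy⟩ :=
      exists_boundary (fun z => (T.deleteEdges {s(a, b)}).Reachable a z) p.1
        (Reachable.refl a) hb
    have hy' : (T.deleteEdges {s(a, b)}).Reachable b y :=
      (reach_side hT.isConnected y).resolve_left hy
    have he'S : s(x, y) ∈ S.edgeSet := p.1.edges_subset_edgeSet hxyE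
    -- length comparison via local minimality
    have hlen : edist a b ≤ edist x y := by
      obtain ⟨wt⟩ := hT.isConnected.preconnected x y
      exact hloc x y wt.toPath a b (walk_cross hb hx hy' wt.toPath.1)
    -- the crossing edge is not an edge of T
    have he'T : s(x, y) ∉ T.edgeSet := by
      intro hmem
      have h1 : s(a, b) ∈ ((SimpleGraph.mem_edgeSet _).mp hmem).toWalk.edges :=
        walk_cross hb hx hy' _
      simp only [SimpleGraph.Adj.toWalk, Walk.edges_cons, Walk.edges_nil,
        List.mem_singleton] at h1
      rw [h1] at heS
      exact heS he'S
    have hsepS : ¬ (S.deleteEdges {s(x, y)}).Reachable a b :=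
      path_sep hS.IsAcyclic p.1 p.2 hxyE
    -- the exchanged tree
    set S' : SimpleGraph M := S.deleteEdges {s(x, y)} ⊔ SimpleGraph.fromEdgeSet {s(a, b)}
      with hS'def
    have hES' : S'.edgeSet = (S.edgeSet \ {s(x, y)}) ∪ {s(a, b)} := by
      rw [hS'def]
      ext f
      simp only [SimpleGraph.edgeSet_sup, SimpleGraph.edgeSet_deleteEdges,
        SimpleGraph.edgeSet_fromEdgeSet, Set.mem_union, Set.mem_diff, Set.mem_singleton_iff,
        Set.mem_setOf_eq]
      constructor
      · rintro (h | ⟨h1, _⟩)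
        exacts [Or.inl h, Or.inr h1]
      · rintro (h | h)
        · exact Or.inl h
        · exact Or.inr ⟨h, by rw [h]; simp [Sym2.mk_isDiag_iff, hadj.ne]⟩
    have hS'ab : S'.Adj a b := by
      rw [hS'def, SimpleGraph.sup_adj]
      exact Or.inr ((SimpleGraph.fromEdgeSet_adj _).mpr ⟨rfl, hadj.ne⟩)
    have hle' : S.deleteEdges {s(x, y)} ≤ S' := by rw [hS'def]; exact le_sup_left
    have hxyS' : S'.Reachable x y := by
      rcases path_edge_sides hS p.1 p.2 hxyE with ⟨hxa, hyb⟩ | ⟨hya, hxb⟩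
      · exact ((hxa.mono hle').trans hS'ab.reachable).trans (hyb.mono hle').symm
      · exact ((hxb.mono hle').trans hS'ab.reachable.symm).trans (hya.mono hle').symm
    have hS'conn : S'.Connected := by
      rw [connected_iff_exists_forall_reachable]
      refine ⟨x, fun z => ?_⟩
      rcases reach_side hS.isConnected (x := x) (y := y) z with hz | hz
      · exact hz.mono hle'
      · exact hxyS'.trans (hz.mono hle')
    have hS'acyc : S'.IsAcyclic := by
      intro v c hc
      by_cases hcab : s(a, b) ∈ c.edges
      · have h2 := (SimpleGraph.adj_and_reachable_delete_edges_iff_exists_cycle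
          (G := S')).mpr ⟨v, c, hc, hcab⟩
        refine hsepS (h2.2.mono ?_)
        have hmono : S'.deleteEdges {s(a, b)} ≤ S.deleteEdges {s(x, y)} := by
          rw [← SimpleGraph.edgeSet_subset_edgeSet, SimpleGraph.edgeSet_deleteEdges, hES',
            SimpleGraph.edgeSet_deleteEdges]
          rintro f ⟨hf1, hf2⟩
          rcases hf1 with hf1 | hf1
          · exact hf1
          · exact absurd hf1 hf2
        exact hmono
      · have hsub : ∀ f ∈ c.edges, f ∈ S.edgeSet := by
          intro f hf
          have hfe : f ∈ S'.edgeSet := c.edges_subset_edgeSet hf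
          rw [hES'] at hfe
          rcases hfe with h | h
          · exact h.1
          · rw [Set.mem_singleton_iff] at h
            exact absurd (h ▸ hf) hcab
        exact hS.IsAcyclic (c.transfer S hsub) (hc.transfer hsub)
    have hS'tree : S'.IsTree := ⟨hS'conn, hS'acyc⟩
    -- sum computations
    have hSsum : graphLen S
        = (∑' f : ↑(S.edgeSet \ {s(x, y)}), edgeLen (f : Sym2 M)) + edgeLen s(x, y) := by
      have hsplit : S.edgeSet = (S.edgeSet \ {s(x, y)}) ∪ {s(x, y)} :=
        (Set.diff_union_of_subset (Set.singleton_subset_iff.mpr he'S)).symm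
      unfold graphLen
      conv_lhs => rw [hsplit]
      rw [ENNReal.summable.tsum_union_disjoint Set.disjoint_sdiff_left ENNReal.summable,
        tsum_singleton]
    have hS'sum : graphLen S'
        = (∑' f : ↑(S.edgeSet \ {s(x, y)}), edgeLen (f : Sym2 M)) + edgeLen s(a, b) := by
      unfold graphLen
      conv_lhs => rw [hES']
      rw [ENNReal.summable.tsum_union_disjoint (Set.disjoint_singleton_right.mpr (fun h => heS h.1))
        ENNReal.summable, tsum_singleton]
    have hle2 : graphLen S' ≤ graphLen S := by
      rw [hSsum, hS'sum]
      exact add_le_add_right (by simpa using hlen) _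
    have hIsum : (∑' f : ↑(S'.edgeSet ∩ T.edgeSet), edgeLen (f : Sym2 M))
        = (∑' f : ↑(S.edgeSet ∩ T.edgeSet), edgeLen (f : Sym2 M)) + edgeLen s(a, b) := by
      have hseteq : S'.edgeSet ∩ T.edgeSet = (S.edgeSet ∩ T.edgeSet) ∪ {s(a, b)} := by
        rw [hES']
        ext f
        simp only [Set.mem_inter_iff, Set.mem_union, Set.mem_diff, Set.mem_singleton_iff]
        constructor
        · rintro ⟨h1 | h1, h2⟩
          · exact Or.inl ⟨h1.1, h2⟩
          · exact Or.inr h1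
        · rintro (⟨h1, h2⟩ | h)
          · exact ⟨Or.inl ⟨h1, fun hf => he'T (hf ▸ h2)⟩, h2⟩
          · exact ⟨Or.inr h, by rw [h]; exact heT⟩
      rw [hseteq,
        ENNReal.summable.tsum_union_disjoint (Set.disjoint_singleton_right.mpr (fun h => heS h.1))
          ENNReal.summable, tsum_singleton]
    have hcard' : (F.erase s(a, b)).card = n := by
      rw [Finset.card_erase_of_mem he, hcard]
      omega
    have hIH := ih (F.erase s(a, b)) S' hcard' hS'tree
      (fun f hf => hFT _ (Finset.mem_of_mem_erase hf))
      (by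
        intro f hf
        have hfe : f ≠ s(a, b) := Finset.ne_of_mem_erase hf
        have hfS : f ∉ S.edgeSet := hFS _ (Finset.mem_of_mem_erase hf)
        rw [hES']
        intro hmem
        rw [Set.mem_union, Set.mem_diff, Set.mem_singleton_iff] at hmem
        rcases hmem with ⟨h1, _⟩ | h1
        · exact hfS h1
        · exact hfe h1)
    calc ∑ f ∈ F, edgeLen f + ∑' f : ↑(S.edgeSet ∩ T.edgeSet), edgeLen (f : Sym2 M)
        = (∑ f ∈ F.erase s(a, b), edgeLen f + edgeLen s(a, b))
            + ∑' f : ↑(S.edgeSet ∩ T.edgeSet), edgeLen (f : Sym2 M) := by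
          rw [Finset.sum_erase_add F _ he]
      _ = ∑ f ∈ F.erase s(a, b), edgeLen f
            + ((∑' f : ↑(S.edgeSet ∩ T.edgeSet), edgeLen (f : Sym2 M)) + edgeLen s(a, b)) := by
          ring
      _ = ∑ f ∈ F.erase s(a, b), edgeLen f
            + ∑' f : ↑(S'.edgeSet ∩ T.edgeSet), edgeLen (f : Sym2 M) := by rw [hIsum]
      _ ≤ graphLen S' := hIH
      _ ≤ graphLen S := hle2

/-- A spanning tree is locally minimal (no edge on the path between two vertices is
longer than the distance between them) iff all its edges are exact; consequently, a
locally minimal spanning tree of finite length is a minimal spanning tree. -/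
theorem locally_minimal_iff_exact [MetricSpace M] (T : SimpleGraph M) (hT : T.IsTree) :
    ((∀ m m' : M, ∀ p : T.Path m m', ∀ a b : M,
        s(a,b) ∈ p.1.edges → edist a b ≤ edist m m') ↔
      (∀ a b : M, T.Adj a b → ExactEdge T a b)) ∧
    ((graphLen T < ⊤ ∧ ∀ m m' : M, ∀ p : T.Path m m', ∀ a b : M,
        s(a,b) ∈ p.1.edges → edist a b ≤ edist m m') → IsMST T) := by
  constructor
  · constructor
    · -- locally minimal → exact
      intro hloc a b hadj
      classical
      have hb : ¬ (T.deleteEdges {s(a, b)}).Reachable a b :=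
        tree_not_reach hT.IsAcyclic hadj
      unfold ExactEdge setDist
      refine le_antisymm ?_ ?_
      · refine le_iInf fun x => le_iInf fun hx => le_iInf fun y => le_iInf fun hy => ?_
        obtain ⟨w⟩ := hT.isConnected.preconnected x y
        exact hloc x y w.toPath a b (walk_cross hb hx hy w.toPath.1)
      · exact iInf₂_le_of_le a (Reachable.refl a) (iInf₂_le b (Reachable.refl b))
    · -- exact → locally minimal
      intro hex m m' p a b hab
      have hadj : T.Adj a b := p.1.adj_of_mem_edges hab
      rcases path_edge_sides hT p.1 p.2 hab with ⟨hm, hm'⟩ | ⟨hm, hm'⟩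
      · have h := hex a b hadj
        unfold ExactEdge setDist at h
        rw [h]
        exact iInf₂_le_of_le m hm (iInf₂_le m' hm')
      · have h := hex b a hadj.symm
        unfold ExactEdge setDist at h
        have hm2 : (T.deleteEdges {s(b, a)}).Reachable b m := by
          rw [show s(b, a) = s(a, b) from Sym2.eq_swap]; exact hm
        have hm'2 : (T.deleteEdges {s(b, a)}).Reachable a m' := by
          rw [show s(b, a) = s(a, b) from Sym2.eq_swap]; exact hm'
        rw [edist_comm a b, h]
        exact iInf₂_le_of_le m hm2 (iInf₂_le m' hm'2)
  · -- locally minimal of finite length → MST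
    rintro ⟨hfin, hloc⟩
    classical
    refine ⟨hT, hfin, fun S hS => ?_⟩
    show (∑' e : ↑T.edgeSet, edgeLen (e : Sym2 M)) ≤ graphLen S
    rw [ENNReal.tsum_eq_iSup_sum]
    refine iSup_le fun Fs => ?_
    have himg : ∑ f ∈ Fs, edgeLen (f : Sym2 M) = ∑ f ∈ Fs.image Subtype.val, edgeLen f :=
      (Finset.sum_image (fun x _ y _ h => Subtype.ext h)).symm
    rw [himg]
    set F : Finset (Sym2 M) := Fs.image Subtype.val with hF
    have hFT : ∀ f ∈ F, f ∈ T.edgeSet := by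
      intro f hf
      obtain ⟨g, _, rfl⟩ := Finset.mem_image.mp hf
      exact g.2
    set F1 := F.filter (fun f => f ∈ S.edgeSet) with hF1
    set F2 := F.filter (fun f => f ∉ S.edgeSet) with hF2
    have hsplit : ∑ f ∈ F1, edgeLen f + ∑ f ∈ F2, edgeLen f = ∑ f ∈ F, edgeLen f :=
      Finset.sum_filter_add_sum_filter_not F _ edgeLen
    have h1 : ∑ f ∈ F1, edgeLen f ≤ ∑' f : ↑(S.edgeSet ∩ T.edgeSet), edgeLen (f : Sym2 M) := by
      rw [tsum_subtype]
      refine le_trans ?_ (ENNReal.sum_le_tsum F1)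
      refine Finset.sum_le_sum fun f hf => ?_
      rw [hF1, Finset.mem_filter] at hf
      rw [Set.indicator_of_mem (Set.mem_inter hf.2 (hFT f hf.1)) edgeLen]
    have h2 := key_exchange hT hloc F2.card F2 S rfl hS
      (fun f hf => hFT f (Finset.mem_filter.mp hf).1)
      (fun f hf => (Finset.mem_filter.mp hf).2)
    calc ∑ f ∈ F, edgeLen f = ∑ f ∈ F1, edgeLen f + ∑ f ∈ F2, edgeLen f := hsplit.symm
      _ ≤ (∑' f : ↑(S.edgeSet ∩ T.edgeSet), edgeLen (f : Sym2 M)) + ∑ f ∈ F2, edgeLen f :=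
          add_le_add_left h1 _
      _ = ∑ f ∈ F2, edgeLen f + ∑' f : ↑(S.edgeSet ∩ T.edgeSet), edgeLen (f : Sym2 M) := add_comm _ _
      _ ≤ graphLen S := h2

end MSTPaper
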